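/- arXiv:2202.13230 — 5 statements merged into one kernel-verified Lean document; each statement's English description precedes it below -/
import Mathlib

section
/- Let σ > 0, let γ satisfy 0 ≤ γ < 2/σ, and let T > 0. Let A be the real 2×2 matrix A = !![0, -1; 1/σ^2, γ] and set ω = √(1/σ² − γ²/4). Then the (1,1) entry (first row, first column) of the matrix exponential exp(−T·A) equals e^{−γT/2}·(cos(Tω) + (γ/(2ω))·sin(Tω)). -/
open Matrix Real

/-- Underdamped regime of the Langevin autocorrelation formula (eq_corr_langevin):
for `0 ≤ γ < 2/σ`, the (1,1) entry of `exp(-T·A)` with `A = !![0, -1; 1/σ², γ]` equals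
`e^{-γT/2}(cos(Tω) + (γ/(2ω)) sin(Tω))` where `ω = √(1/σ² - γ²/4)`. -/
theorem langevin_acf_underdamped (σ γ T : ℝ) (hσ : 0 < σ) (hγ0 : 0 ≤ γ)
    (hγ : γ < 2 / σ) (hT : 0 < T)
    (A : Matrix (Fin 2) (Fin 2) ℝ) (hA : A = !![0, -1; 1 / σ ^ 2, γ])
    (ω : ℝ) (hω : ω = Real.sqrt (1 / σ ^ 2 - γ ^ 2 / 4)) :
    NormedSpace.exp (-(T • A)) 0 0 =
      Real.exp (-(γ * T) / 2) * (Real.cos (T * ω) + γ / (2 * ω) * Real.sin (T * ω)) := by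
  have hσ' : σ ≠ 0 := ne_of_gt hσ
  -- positivity of the discriminant
  have hdisc : 0 < 1 / σ ^ 2 - γ ^ 2 / 4 := by
    have h1 : γ ^ 2 < (2 / σ) ^ 2 := by
      apply sq_lt_sq' _ hγ
      have : (0:ℝ) < 2 / σ := by positivity
      linarith
    have h2 : (2 / σ) ^ 2 = 4 * (1 / σ ^ 2) := by field_simp; ring
    nlinarith
  have hωpos : 0 < ω := by rw [hω]; exact Real.sqrt_pos.mpr hdisc
  have hωsq : ω ^ 2 = 1 / σ ^ 2 - γ ^ 2 / 4 := by
    rw [hω, Real.sq_sqrt hdisc.le]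
  have hTω : T * ω ≠ 0 := by positivity
  -- the "imaginary unit" matrix
  set J : Matrix (Fin 2) (Fin 2) ℝ :=
    (T * ω)⁻¹ • !![T * γ / 2, T; -(T / σ ^ 2), -(T * γ / 2)] with hJ
  have hJ2 : J * J = -1 := by
    have key : (!![T * γ / 2, T; -(T / σ ^ 2), -(T * γ / 2)] *
        !![T * γ / 2, T; -(T / σ ^ 2), -(T * γ / 2)] : Matrix (Fin 2) (Fin 2) ℝ)
        = (-((T * ω) ^ 2)) • 1 := by
      ext i j
      fin_cases i <;> fin_cases j <;>
        simp [Matrix.mul_apply, Fin.sum_univ_two, Matrix.one_apply] <;>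
        first
          | linear_combination (T ^ 2) * hωsq
          | ring
    rw [hJ, Matrix.smul_mul, Matrix.mul_smul, key, smul_smul, smul_smul]
    rw [show (T * ω)⁻¹ * (T * ω)⁻¹ * -((T * ω) ^ 2) = -1 by field_simp]
    simp
  -- the algebra map from ℂ
  let φ : ℂ →ₐ[ℝ] Matrix (Fin 2) (Fin 2) ℝ := Complex.liftAux J hJ2
  have hφcont : Continuous φ := φ.toLinearMap.continuous_of_finiteDimensional
  set z : ℂ := Complex.mk (-(γ * T) / 2) (T * ω) with hz
  have hφz : φ z = -(T • A) := by
    rw [show φ z = algebraMap ℝ _ z.re + z.im • J from Complex.liftAux_apply J hJ2 z]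
    ext i j
    fin_cases i <;> fin_cases j <;>
      · simp [hA, hJ, Matrix.algebraMap_matrix_apply, Matrix.one_apply, hz]
        field_simp
        all_goals ring
  have hmain : NormedSpace.exp (-(T • A)) = φ (NormedSpace.exp z) := by
    rw [← hφz]
    letI : SeminormedRing (Matrix (Fin 2) (Fin 2) ℝ) := Matrix.linftyOpSemiNormedRing
    letI : NormedRing (Matrix (Fin 2) (Fin 2) ℝ) := Matrix.linftyOpNormedRing
    letI : NormedAlgebra ℝ (Matrix (Fin 2) (Fin 2) ℝ) := Matrix.linftyOpNormedAlgebra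
    exact (NormedSpace.map_exp φ hφcont z).symm
  have hexpz : NormedSpace.exp z = Complex.exp z := by
    rw [← Complex.exp_eq_exp_ℂ]
  rw [hmain, hexpz,
    show φ (Complex.exp z) = algebraMap ℝ _ (Complex.exp z).re + (Complex.exp z).im • J from
      Complex.liftAux_apply J hJ2 _]
  have hre : (Complex.exp z).re = Real.exp (-(γ * T) / 2) * Real.cos (T * ω) := by
    rw [Complex.exp_re]
  have him : (Complex.exp z).im = Real.exp (-(γ * T) / 2) * Real.sin (T * ω) := by
    rw [Complex.exp_im]
  simp only [Matrix.add_apply, Matrix.smul_apply, Matrix.algebraMap_matrix_apply,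
    Matrix.one_apply, hre, him, hJ, smul_eq_mul]
  norm_num
  have hωne : ω ≠ 0 := ne_of_gt hωpos
  field_simp
end

section
/- Let σ > 0, let γ > 2/σ, and let T > 0. Let A be the real 2×2 matrix A = !![0, -1; 1/σ^2, γ] and set ω = √(γ²/4 − 1/σ²). Then the (1,1) entry of the matrix exponential exp(−T·A) equals e^{−γT/2}·(cosh(Tω) + (γ/(2ω))·sinh(Tω)). -/
open Matrix Real

/-- Overdamped regime of the Langevin autocorrelation formula (eq_corr_langevin):
for `γ > 2/σ`, the (1,1) entry of `exp(-T·A)` with `A = !![0, -1; 1/σ², γ]` equals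
`e^{-γT/2}(cosh(Tω) + (γ/(2ω)) sinh(Tω))` where `ω = √(γ²/4 - 1/σ²)`. -/
theorem langevin_acf_overdamped (σ γ T : ℝ) (hσ : 0 < σ) (hγ : 2 / σ < γ) (hT : 0 < T)
    (A : Matrix (Fin 2) (Fin 2) ℝ) (hA : A = !![0, -1; 1 / σ ^ 2, γ])
    (ω : ℝ) (hω : ω = Real.sqrt (γ ^ 2 / 4 - 1 / σ ^ 2)) :
    NormedSpace.exp (-(T • A)) 0 0 =
      Real.exp (-(γ * T) / 2) * (Real.cosh (T * ω) + γ / (2 * ω) * Real.sinh (T * ω)) := by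
  have hσ2 : (0:ℝ) < σ^2 := by positivity
  have hγ0 : 0 < γ := lt_trans (div_pos two_pos hσ) hγ
  have hpos : (0:ℝ) < γ^2/4 - 1/σ^2 := by
    have h3 : 2 < γ * σ := by
      rw [div_lt_iff₀ hσ] at hγ; linarith
    rw [sub_pos, div_lt_div_iff₀ hσ2 (by norm_num : (0:ℝ) < 4)]
    nlinarith
  have hω0 : 0 < ω := hω ▸ Real.sqrt_pos.mpr hpos
  have hω2 : ω^2 = γ^2/4 - 1/σ^2 := by rw [hω]; exact Real.sq_sqrt hpos.le
  have hωne : ω ≠ 0 := hω0.ne'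
  set lp : ℝ := γ/2 + ω with hlp
  set lm : ℝ := γ/2 - ω with hlm
  set S : Matrix (Fin 2) (Fin 2) ℝ := !![1, 1; -lp, -lm] with hS
  set B : Matrix (Fin 2) (Fin 2) ℝ := (2*ω)⁻¹ • !![-lm, -1; lp, 1] with hB
  have hSB : S * B = 1 := by
    ext i j
    fin_cases i <;> fin_cases j <;>
      simp [hS, hB, Matrix.mul_apply, Fin.sum_univ_two, hlp, hlm] <;>
      field_simp <;> ring
  have hUnit : IsUnit S := (Matrix.isUnit_iff_isUnit_det S).mpr (Matrix.isUnit_det_of_right_inverse hSB)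
  have hSinv : S⁻¹ = B := Matrix.inv_eq_right_inv hSB
  set D : Matrix (Fin 2) (Fin 2) ℝ := Matrix.diagonal ![-(T*lp), -(T*lm)] with hD
  have hDm : D = !![-(T*lp), 0; 0, -(T*lm)] := by
    rw [hD]; ext i j; fin_cases i <;> fin_cases j <;> simp [Matrix.diagonal_apply]
  have h1 : -(T • A) * S = S * D := by
    rw [hA, hS, hDm]
    ext i j
    fin_cases i <;> fin_cases j <;>
      simp [Matrix.mul_apply, Fin.sum_univ_two, hlp, hlm] <;>
      first
        | ring1
        | linear_combination (-T)*hω2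
  have hM : -(T • A) = S * D * S⁻¹ := by
    rw [hSinv]
    calc -(T • A) = -(T • A) * (S * B) := by rw [hSB, mul_one]
      _ = (-(T • A) * S) * B := by rw [mul_assoc]
      _ = S * D * B := by rw [h1]
  have hexp : NormedSpace.exp (-(T • A)) = S * NormedSpace.exp D * S⁻¹ := by
    rw [hM]; exact Matrix.exp_conj S D hUnit
  have hexpD : NormedSpace.exp D =
      !![Real.exp (-(T*lp)), 0; 0, Real.exp (-(T*lm))] := by
    rw [hD, Matrix.exp_diagonal]
    ext i j
    fin_cases i <;> fin_cases j <;>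
      simp [Matrix.diagonal_apply, ← Real.exp_eq_exp_ℝ]
  rw [hexp, hexpD, hSinv]
  have e1 : Real.exp (-(T*lp)) = Real.exp (-(γ*T)/2) * Real.exp (-(T*ω)) := by
    rw [← Real.exp_add]; congr 1; rw [hlp]; ring
  have e2 : Real.exp (-(T*lm)) = Real.exp (-(γ*T)/2) * Real.exp (T*ω) := by
    rw [← Real.exp_add]; congr 1; rw [hlm]; ring
  rw [Real.cosh_eq, Real.sinh_eq]
  rw [e1, e2]
  simp [hS, hB, Matrix.mul_apply, Fin.sum_univ_two, e1, e2, hlp, hlm]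
  field_simp
  ring
end

section
/- Let d ≥ 1, let H be a real symmetric d×d matrix, and let p, p₀, q, q₀, u₀ be real numbers. Then the 2d×2d block matrix with blocks [[p·H + p₀·I, q·H + q₀·I],[q·H + q₀·I, u₀·I]] is positive semidefinite if and only if for every eigenvalue σ of H one has: p·σ + p₀ ≥ 0, u₀ ≥ 0, and (q·σ + q₀)² ≤ (p·σ + p₀)·u₀ (equivalently, the 2×2 matrix !![p·σ + p₀, q·σ + q₀; q·σ + q₀, u₀] is positive semidefinite). -/
open Matrix

private lemma quad_nonneg' {a b c : ℝ} (ha : 0 ≤ a) (hc : 0 ≤ c) (hb : b ^ 2 ≤ a * c)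
    (s t : ℝ) : 0 ≤ a * s ^ 2 + 2 * b * s * t + c * t ^ 2 := by
  rcases eq_or_lt_of_le ha with h0 | hpos
  · have hb0 : b = 0 := by nlinarith [sq_nonneg b]
    subst hb0
    nlinarith [mul_nonneg hc (sq_nonneg t)]
  · nlinarith [sq_nonneg (a * s + b * t), mul_nonneg (sub_nonneg.2 hb) (sq_nonneg t)]

private lemma quad_iff' {a b c : ℝ} :
    (∀ s t : ℝ, 0 ≤ a * s ^ 2 + 2 * b * s * t + c * t ^ 2) ↔
      0 ≤ a ∧ 0 ≤ c ∧ b ^ 2 ≤ a * c := by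
  constructor
  · intro h
    refine ⟨by simpa using h 1 0, by simpa using h 0 1, ?_⟩
    have hd := discrim_le_zero (a := a) (b := 2 * b) (c := c)
      (fun s => by nlinarith [h s 1])
    rw [discrim] at hd; nlinarith
  · rintro ⟨ha, hc, hb⟩ s t; exact quad_nonneg' ha hc hb s t

private lemma fromBlocks_diagonal_posSemidef_iff {n : ℕ} (a b c : Fin n → ℝ) :
    (fromBlocks (diagonal a) (diagonal b) (diagonal b) (diagonal c)).PosSemidef ↔
      ∀ i, 0 ≤ a i ∧ 0 ≤ c i ∧ b i ^ 2 ≤ a i * c i := by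
  have form : ∀ y z : Fin n → ℝ,
      (Sum.elim y z) ⬝ᵥ
        ((fromBlocks (diagonal a) (diagonal b) (diagonal b) (diagonal c)) *ᵥ Sum.elim y z)
        = ∑ i, (a i * y i ^ 2 + 2 * b i * y i * z i + c i * z i ^ 2) := by
    intro y z
    rw [fromBlocks_mulVec, sumElim_dotProduct_sumElim]
    simp only [dotProduct, Pi.add_apply, mulVec_diagonal, Function.comp_apply, Sum.elim_inl, Sum.elim_inr]
    rw [← Finset.sum_add_distrib]
    exact Finset.sum_congr rfl fun i _ => by ring
  constructor
  · intro h i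
    have key : ∀ s t : ℝ, 0 ≤ a i * s ^ 2 + 2 * b i * s * t + c i * t ^ 2 := by
      intro s t
      have h2 := (posSemidef_iff_dotProduct_mulVec.mp h).2 (Sum.elim (Pi.single i s) (Pi.single i t))
      rw [star_trivial, form] at h2
      simpa [Pi.single_apply, mul_ite, ite_mul, apply_ite (· ^ 2), Finset.sum_add_distrib, Finset.sum_ite_eq'] using h2
    exact quad_iff'.mp key
  · intro h
    rw [posSemidef_iff_dotProduct_mulVec]
    constructor
    · simp only [Matrix.IsHermitian, fromBlocks_conjTranspose, diagonal_conjTranspose]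
      rfl
    · intro x
      rw [star_trivial, ← Sum.elim_comp_inl_inr x, form]
      exact Finset.sum_nonneg fun i _ =>
        quad_nonneg' (h i).1 (h i).2.1 (h i).2.2 _ _

/-- Key linear-algebra step in the proof of Lemma generator_bound: a block matrix whose
four blocks are affine polynomials of the same real symmetric matrix `H` (with the
lower-right block a multiple of the identity) is positive semidefinite exactly when,
for each eigenvalue `σ` of `H`, the attached 2×2 matrix
`!![p·σ + p₀, q·σ + q₀; q·σ + q₀, u₀]` is positive semidefinite, i.e.
`p·σ + p₀ ≥ 0`, `u₀ ≥ 0` and `(q·σ + q₀)² ≤ (p·σ + p₀)·u₀`. -/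
theorem blockMatrix_posSemidef_iff_eigenvalues (d : ℕ) (hd : 1 ≤ d)
    (H : Matrix (Fin d) (Fin d) ℝ) (hH : H.IsSymm) (p p₀ q q₀ u₀ : ℝ) :
    (Matrix.fromBlocks (p • H + p₀ • 1) (q • H + q₀ • 1)
        (q • H + q₀ • 1) (u₀ • (1 : Matrix (Fin d) (Fin d) ℝ))).PosSemidef ↔
      ∀ σ ∈ spectrum ℝ H,
        0 ≤ p * σ + p₀ ∧ 0 ≤ u₀ ∧ (q * σ + q₀) ^ 2 ≤ (p * σ + p₀) * u₀ := by
  have hHer : H.IsHermitian := by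
    ext i j
    rw [conjTranspose_apply, star_trivial]
    exact (congrFun (congrFun hH j) i).symm
  set U : Matrix (Fin d) (Fin d) ℝ := (hHer.eigenvectorUnitary : Matrix (Fin d) (Fin d) ℝ) with hUdef
  set μ : Fin d → ℝ := hHer.eigenvalues with hμdef
  have hU1 : U * star U = 1 := Matrix.mem_unitaryGroup_iff.mp (hHer.eigenvectorUnitary).2
  have hU2 : star U * U = 1 := Matrix.mem_unitaryGroup_iff'.mp (hHer.eigenvectorUnitary).2
  have hdiag : star U * H * U = diagonal μ := by
    have := hHer.conjStarAlgAut_star_eigenvectorUnitary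
    simpa using this
  have hblock : ∀ r r₀ : ℝ, star U * (r • H + r₀ • 1) * U = diagonal (fun i => r * μ i + r₀) := by
    intro r r₀
    have h1 : star U * (r • H + r₀ • 1) * U
        = r • (star U * H * U) + r₀ • (star U * U) := by
      simp only [mul_add, add_mul, Matrix.mul_smul, Matrix.smul_mul, mul_one]
    rw [h1, hdiag, hU2]
    ext i j
    by_cases hij : i = j <;> simp [diagonal, Matrix.one_apply, hij, mul_comm]
  set W : Matrix (Fin d ⊕ Fin d) (Fin d ⊕ Fin d) ℝ := fromBlocks U 0 0 U with hWdef
  have hWs : star W = fromBlocks (star U) 0 0 (star U) := by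
    simp [hWdef, star_eq_conjTranspose, fromBlocks_conjTranspose, fromBlocks_transpose]
  have hW1 : W * star W = 1 := by
    rw [hWs, hWdef, fromBlocks_multiply]
    simp [hU1, ← fromBlocks_one]
  have hW2 : star W * W = 1 := by
    rw [hWs, hWdef, fromBlocks_multiply]
    simp [hU2, ← fromBlocks_one]
  set M : Matrix (Fin d ⊕ Fin d) (Fin d ⊕ Fin d) ℝ :=
    Matrix.fromBlocks (p • H + p₀ • 1) (q • H + q₀ • 1)
        (q • H + q₀ • 1) (u₀ • (1 : Matrix (Fin d) (Fin d) ℝ)) with hMdef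
  have hu₀ : (u₀ • (1 : Matrix (Fin d) (Fin d) ℝ)) = (0 : ℝ) • H + u₀ • 1 := by simp
  have hconj : star W * M * W
      = fromBlocks (diagonal (fun i => p * μ i + p₀)) (diagonal (fun i => q * μ i + q₀))
          (diagonal (fun i => q * μ i + q₀)) (diagonal (fun _ => u₀)) := by
    rw [hMdef, hWs, hWdef, fromBlocks_multiply, fromBlocks_multiply]
    simp only [Matrix.zero_mul, Matrix.mul_zero, add_zero, zero_add]
    rw [hu₀, hblock, hblock, hblock]
    congr 1
    funext i
    simp
  have hiff : M.PosSemidef ↔ (star W * M * W).PosSemidef := by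
    constructor
    · intro h
      have := h.conjTranspose_mul_mul_same W
      rwa [← star_eq_conjTranspose] at this
    · intro h
      have := h.conjTranspose_mul_mul_same (star W)
      rw [← star_eq_conjTranspose, star_star] at this
      have e : W * (star W * M * W) * star W = M := by
        rw [show W * (star W * M * W) * star W = (W * star W) * M * (W * star W) by
          noncomm_ring]
        rw [hW1, one_mul, mul_one]
      rwa [e] at this
  rw [hiff, hconj, fromBlocks_diagonal_posSemidef_iff,
    hHer.spectrum_real_eq_range_eigenvalues]
  constructor
  · rintro h σ ⟨i, rfl⟩
    exact h i
  · intro h i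
    exact h (μ i) ⟨i, rfl⟩
end

section
/- Let d ≥ 1, let Φ : ℝ^d → ℝ be differentiable with (Borel measurable) gradient ∇Φ, let h > 0, and let L ≥ 1. Define the leapfrog map θ_h : ℝ^d × ℝ^d → ℝ^d × ℝ^d by θ_h(x,v) = (x₁, v₁), where v_{1/2} = v − (h/2)∇Φ(x), x₁ = x + h·v_{1/2}, v₁ = v_{1/2} − (h/2)∇Φ(x₁). Let H(x,v) = Φ(x) + |v|²/2, let θ_h^L be the L-fold composition of θ_h, and define Δ : ℝ^d × ℝ^d → ℝ by Δ(z) = H(θ_h^L(z)) − H(z). Let f : ℝ → ℝ be Borel measurable such that z ↦ f(Δ(z))·e^{−H(z)} is Lebesgue-integrable on ℝ^d × ℝ^d. Then z ↦ f(−Δ(z))·e^{−Δ(z)}·e^{−H(z)} is Lebesgue-integrable on ℝ^d × ℝ^d and ∫ f(−Δ(z))·e^{−Δ(z)}·e^{−H(z)} dz = ∫ f(Δ(z))·e^{−H(z)} dz. -/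
open MeasureTheory

noncomputable section

/-- The Störmer–Verlet (leapfrog) step with time-step `h` for the potential `Φ`. -/
def leapfrog {d : ℕ} (Φ : EuclideanSpace ℝ (Fin d) → ℝ) (h : ℝ)
    (z : EuclideanSpace ℝ (Fin d) × EuclideanSpace ℝ (Fin d)) :
    EuclideanSpace ℝ (Fin d) × EuclideanSpace ℝ (Fin d) :=
  let vhalf := z.2 - (h / 2) • gradient Φ z.1
  let x₁ := z.1 + h • vhalf
  (x₁, vhalf - (h / 2) • gradient Φ x₁)

/-- The Hamiltonian `H(x,v) = Φ(x) + |v|²/2`. -/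
def hamiltonian {d : ℕ} (Φ : EuclideanSpace ℝ (Fin d) → ℝ)
    (z : EuclideanSpace ℝ (Fin d) × EuclideanSpace ℝ (Fin d)) : ℝ :=
  Φ z.1 + ‖z.2‖ ^ 2 / 2

namespace EnergySkewAux

variable {d : ℕ} (Φ : EuclideanSpace ℝ (Fin d) → ℝ) (h : ℝ)

/-- Velocity flip. -/
def flipv (z : EuclideanSpace ℝ (Fin d) × EuclideanSpace ℝ (Fin d)) :
    EuclideanSpace ℝ (Fin d) × EuclideanSpace ℝ (Fin d) := (z.1, -z.2)

lemma flipv_flipv (z : EuclideanSpace ℝ (Fin d) × EuclideanSpace ℝ (Fin d)) :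
    flipv (flipv z) = z := by simp [flipv]

lemma hamiltonian_flipv (z : EuclideanSpace ℝ (Fin d) × EuclideanSpace ℝ (Fin d)) :
    hamiltonian Φ (flipv z) = hamiltonian Φ z := by
  simp [hamiltonian, flipv]

/-- Time reversibility of a single leapfrog step. -/
lemma lf_rev (z : EuclideanSpace ℝ (Fin d) × EuclideanSpace ℝ (Fin d)) :
    leapfrog Φ h (flipv (leapfrog Φ h z)) = flipv z := by
  obtain ⟨x, v⟩ := z
  simp only [leapfrog, flipv]
  have hx : (x + h • (v - (h / 2) • gradient Φ x)) +
      h • (-((v - (h / 2) • gradient Φ x) -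
        (h / 2) • gradient Φ (x + h • (v - (h / 2) • gradient Φ x))) -
        (h / 2) • gradient Φ (x + h • (v - (h / 2) • gradient Φ x))) = x := by
    module
  refine Prod.ext hx ?_
  show _ - (h / 2) • gradient Φ _ = -v
  rw [hx]
  module

/-- Time reversibility of the `L`-step leapfrog trajectory. -/
lemma iter_rev (L : ℕ) (z : EuclideanSpace ℝ (Fin d) × EuclideanSpace ℝ (Fin d)) :
    (leapfrog Φ h)^[L] (flipv ((leapfrog Φ h)^[L] z)) = flipv z := by
  induction L generalizing z with
  | zero => simp
  | succ n ih =>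
      calc (leapfrog Φ h)^[n + 1] (flipv ((leapfrog Φ h)^[n + 1] z))
          = (leapfrog Φ h)^[n]
            (leapfrog Φ h (flipv (leapfrog Φ h ((leapfrog Φ h)^[n] z)))) := by
            rw [Function.iterate_succ_apply' (leapfrog Φ h) n z,
              Function.iterate_succ_apply]
        _ = (leapfrog Φ h)^[n] (flipv ((leapfrog Φ h)^[n] z)) := by rw [lf_rev]
        _ = flipv z := ih z

lemma mp_shear_v (hgrad : Measurable (gradient Φ)) :
    MeasurePreserving (fun p : EuclideanSpace ℝ (Fin d) × EuclideanSpace ℝ (Fin d) =>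
      (p.1, p.2 - (h / 2) • gradient Φ p.1)) volume volume := by
  rw [Measure.volume_eq_prod]
  refine (MeasurePreserving.id volume).skew_product
    (g := fun a c => c - (h / 2) • gradient Φ a) ?_
    (Filter.Eventually.of_forall fun a => by
      simp only [sub_eq_add_neg]
      exact map_add_right_eq_self volume _)
  show Measurable fun p : EuclideanSpace ℝ (Fin d) × EuclideanSpace ℝ (Fin d) =>
    p.2 - (h / 2) • gradient Φ p.1
  exact measurable_snd.sub ((hgrad.comp measurable_fst).const_smul (h / 2))

lemma mp_shear_x :
    MeasurePreserving (fun p : EuclideanSpace ℝ (Fin d) × EuclideanSpace ℝ (Fin d) =>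
      (p.1 + h • p.2, p.2)) volume volume := by
  have h1 : MeasurePreserving (fun q : EuclideanSpace ℝ (Fin d) × EuclideanSpace ℝ (Fin d) =>
      (q.1, q.2 + h • q.1)) volume volume := by
    rw [Measure.volume_eq_prod]
    refine (MeasurePreserving.id volume).skew_product
      (g := fun a c => c + h • a) ?_
      (Filter.Eventually.of_forall fun a => map_add_right_eq_self volume _)
    show Measurable fun p : EuclideanSpace ℝ (Fin d) × EuclideanSpace ℝ (Fin d) =>
      p.2 + h • p.1
    exact measurable_snd.add (measurable_fst.const_smul h)
  have hs : MeasurePreserving (Prod.swap :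
      EuclideanSpace ℝ (Fin d) × EuclideanSpace ℝ (Fin d) →
      EuclideanSpace ℝ (Fin d) × EuclideanSpace ℝ (Fin d)) volume volume := by
    rw [Measure.volume_eq_prod]; exact Measure.measurePreserving_swap
  exact (hs.comp h1).comp hs

lemma mp_flipv :
    MeasurePreserving (flipv : EuclideanSpace ℝ (Fin d) × EuclideanSpace ℝ (Fin d) →
      EuclideanSpace ℝ (Fin d) × EuclideanSpace ℝ (Fin d)) volume volume := by
  rw [Measure.volume_eq_prod]
  refine (MeasurePreserving.id volume).skew_product
    (g := fun _ c => -c) ?_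
    (Filter.Eventually.of_forall fun a => Measure.map_neg_eq_self volume)
  show Measurable fun p : EuclideanSpace ℝ (Fin d) × EuclideanSpace ℝ (Fin d) => -p.2
  exact measurable_snd.neg

lemma mp_leapfrog (hgrad : Measurable (gradient Φ)) :
    MeasurePreserving (leapfrog Φ h) volume volume := by
  have hco : leapfrog Φ h = (fun p : EuclideanSpace ℝ (Fin d) × EuclideanSpace ℝ (Fin d) =>
      (p.1, p.2 - (h / 2) • gradient Φ p.1)) ∘
    (fun p => (p.1 + h • p.2, p.2)) ∘
    (fun p => (p.1, p.2 - (h / 2) • gradient Φ p.1)) := by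
    funext z; simp [leapfrog, Function.comp]
  rw [hco]
  exact ((mp_shear_v Φ h hgrad).comp (mp_shear_x h)).comp (mp_shear_v Φ h hgrad)

end EnergySkewAux

open EnergySkewAux in
/-- Proposition log-AR_properties (ii), case γ = 0 (HMC): the total energy difference
`Δ(z) = H(θ_h^L z) - H(z)` of an `L`-step leapfrog trajectory satisfies the log
Metropolis–Hastings identity `E[f(-Δ) e^{-Δ}] = E[f(Δ)]` under the unnormalized
extended target `e^{-H}` (Lebesgue reference measure). -/
theorem energy_difference_skew_identity (d : ℕ) (hd : 1 ≤ d)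
    (Φ : EuclideanSpace ℝ (Fin d) → ℝ) (hΦ : Differentiable ℝ Φ)
    (hgrad : Measurable (gradient Φ)) (h : ℝ) (hh : 0 < h) (L : ℕ) (hL : 1 ≤ L)
    (Δ : EuclideanSpace ℝ (Fin d) × EuclideanSpace ℝ (Fin d) → ℝ)
    (hΔ : ∀ z, Δ z = hamiltonian Φ ((leapfrog Φ h)^[L] z) - hamiltonian Φ z)
    (f : ℝ → ℝ) (hf : Measurable f)
    (hint : Integrable (fun z => f (Δ z) * Real.exp (-hamiltonian Φ z))) :
    Integrable (fun z => f (-Δ z) * Real.exp (-Δ z) * Real.exp (-hamiltonian Φ z)) ∧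
      ∫ z, f (-Δ z) * Real.exp (-Δ z) * Real.exp (-hamiltonian Φ z) =
        ∫ z, f (Δ z) * Real.exp (-hamiltonian Φ z) := by
  set T := (leapfrog Φ h)^[L] with hT
  set R := fun z : EuclideanSpace ℝ (Fin d) × EuclideanSpace ℝ (Fin d) =>
    flipv (T z) with hR
  -- R is an involution
  have hRR : ∀ z, R (R z) = z := by
    intro z
    show flipv (T (flipv (T z))) = z
    rw [hT, iter_rev Φ h L z, flipv_flipv]
  -- R is measure preserving
  have mpR : MeasurePreserving R volume volume :=
    (mp_flipv).comp ((mp_leapfrog Φ h hgrad).iterate L)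
  -- R as a measurable equivalence
  let e : (EuclideanSpace ℝ (Fin d) × EuclideanSpace ℝ (Fin d)) ≃ᵐ
      (EuclideanSpace ℝ (Fin d) × EuclideanSpace ℝ (Fin d)) :=
    { toFun := R
      invFun := R
      left_inv := hRR
      right_inv := hRR
      measurable_toFun := mpR.measurable
      measurable_invFun := mpR.measurable }
  have hemb : MeasurableEmbedding R := e.measurableEmbedding
  -- pointwise identities
  have hHR : ∀ z, hamiltonian Φ (R z) = hamiltonian Φ z + Δ z := by
    intro z
    show hamiltonian Φ (flipv (T z)) = _
    rw [hamiltonian_flipv, hΔ z]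
    ring
  have hΔR : ∀ z, Δ (R z) = -Δ z := by
    intro z
    rw [hΔ (R z)]
    have hTR : T (R z) = flipv z := by rw [hR, hT]; exact iter_rev Φ h L z
    rw [hTR, hamiltonian_flipv, hHR z, hΔ z]
    ring
  -- the composed integrand
  have hcomp : ∀ z, (fun w => f (Δ w) * Real.exp (-hamiltonian Φ w)) (R z) =
      f (-Δ z) * Real.exp (-Δ z) * Real.exp (-hamiltonian Φ z) := by
    intro z
    simp only
    rw [hΔR z, hHR z]
    rw [neg_add, Real.exp_add]
    ring
  -- measurability of the integrand
  have hHm : Measurable (hamiltonian Φ) := by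
    unfold hamiltonian
    exact ((hΦ.continuous.measurable).comp measurable_fst).add
      ((measurable_snd.norm.pow_const 2).div_const 2)
  have hΔm : Measurable Δ := by
    have : Δ = fun z => hamiltonian Φ (T z) - hamiltonian Φ z := funext hΔ
    rw [this]
    exact (hHm.comp ((mp_leapfrog Φ h hgrad).iterate L).measurable).sub hHm
  have hgm : Measurable fun z => f (Δ z) * Real.exp (-hamiltonian Φ z) :=
    (hf.comp hΔm).mul (Real.measurable_exp.comp hHm.neg)
  -- conclude
  have hfun : (fun z => (fun w => f (Δ w) * Real.exp (-hamiltonian Φ w)) (R z)) =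
      fun z => f (-Δ z) * Real.exp (-Δ z) * Real.exp (-hamiltonian Φ z) :=
    funext hcomp
  constructor
  · have := (mpR.integrable_comp hgm.aestronglyMeasurable).mpr hint
    rwa [show ((fun w => f (Δ w) * Real.exp (-hamiltonian Φ w)) ∘ R) =
      fun z => f (-Δ z) * Real.exp (-Δ z) * Real.exp (-hamiltonian Φ z) from funext hcomp]
      at this
  · have := mpR.integral_comp hemb (fun w => f (Δ w) * Real.exp (-hamiltonian Φ w))
    rw [← this]
    exact (integral_congr_ae (Filter.Eventually.of_forall hcomp)).symm

end
end

section
/- Let σ > 0 and let μ be the Gaussian probability measure on ℝ with mean −σ²/2 and variance σ². Then ∫ min(1, e^y) dμ(y) = 2·Ψ(−σ/2), where Ψ is the cumulative distribution function of the standard Gaussian measure on ℝ. -/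
open MeasureTheory ProbabilityTheory Real
open scoped NNReal ENNReal
lemma setIntegral_gaussianReal_pdf (m : ℝ) (v : ℝ≥0) (hv : v ≠ 0) {s : Set ℝ}
    (hs : MeasurableSet s) (g : ℝ → ℝ) :
    ∫ y in s, g y ∂(gaussianReal m v) = ∫ y in s, gaussianPDFReal m v y * g y := by
  rw [gaussianReal_of_var_ne_zero _ hv, restrict_withDensity hs]
  have : (gaussianPDF m v) = fun x => ((gaussianPDFReal m v x).toNNReal : ℝ≥0∞) := rfl
  rw [this, integral_withDensity_eq_integral_smul
    ((measurable_gaussianPDFReal m v).real_toNNReal)]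
  congr 1
  ext y
  rw [NNReal.smul_def, Real.coe_toNNReal _ (gaussianPDFReal_nonneg m v y), smul_eq_mul]

lemma tilt (σ : ℝ) (hσ : 0 < σ) (y : ℝ) :
    gaussianPDFReal (-σ ^ 2 / 2) ⟨σ ^ 2, sq_nonneg σ⟩ y * Real.exp y
      = gaussianPDFReal (σ ^ 2 / 2) ⟨σ ^ 2, sq_nonneg σ⟩ y := by
  simp only [gaussianPDFReal, NNReal.coe_mk]
  rw [mul_assoc, ← Real.exp_add]
  congr 1
  change rexp (-(y - -σ ^ 2 / 2) ^ 2 / (2 * σ ^ 2) + y) = rexp (-(y - σ ^ 2 / 2) ^ 2 / (2 * σ ^ 2))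
  have h2 : (σ:ℝ)^2 ≠ 0 := by positivity
  field_simp
  ring


/-- Proposition SingleCoordinateDisplacement (i): if `μ` is the Gaussian measure with
mean `-σ²/2` and variance `σ²`, then `∫ min(1, eʸ) dμ(y) = 2·Ψ(-σ/2)` where `Ψ` is the
standard Gaussian CDF. -/
theorem gaussian_acceptance_rate (σ : ℝ) (hσ : 0 < σ) :
    ∫ y, min 1 (Real.exp y) ∂(gaussianReal (-σ ^ 2 / 2) ⟨σ ^ 2, sq_nonneg σ⟩) =
      2 * ((gaussianReal 0 1) (Set.Iic (-σ / 2))).toReal := by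
  set v : ℝ≥0 := ⟨σ ^ 2, sq_nonneg σ⟩ with hvdef
  have hv : v ≠ 0 := by
    simp only [hvdef, ne_eq, ← NNReal.coe_inj, NNReal.coe_mk, NNReal.coe_zero]
    exact fun h => (pow_pos hσ 2).ne' (congrArg Subtype.val h)
  set μ := gaussianReal (-σ ^ 2 / 2) v with hμ
  -- integrability
  have hf_int : Integrable (fun y => min 1 (Real.exp y)) μ := by
    refine Integrable.mono' (integrable_const 1)
      ((continuous_const.min Real.continuous_exp).aestronglyMeasurable) (ae_of_all _ fun y => ?_)
    rw [Real.norm_eq_abs, abs_of_nonneg (le_min zero_le_one (Real.exp_pos y).le)]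
    exact min_le_left _ _
  -- split
  rw [← integral_add_compl (measurableSet_Iic : MeasurableSet (Set.Iic (0:ℝ))) hf_int,
    Set.compl_Iic]
  have h1 : ∫ y in Set.Iic (0:ℝ), min 1 (Real.exp y) ∂μ = ∫ y in Set.Iic (0:ℝ), Real.exp y ∂μ := by
    refine setIntegral_congr_fun measurableSet_Iic fun y hy => ?_
    exact min_eq_right (Real.exp_le_one_iff.mpr hy)
  have h2 : ∫ y in Set.Ioi (0:ℝ), min 1 (Real.exp y) ∂μ = ∫ y in Set.Ioi (0:ℝ), (1:ℝ) ∂μ := by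
    refine setIntegral_congr_fun measurableSet_Ioi fun y hy => ?_
    exact min_eq_left (Real.one_le_exp (le_of_lt hy))
  rw [h1, h2]
  -- first piece
  have hA : ∫ y in Set.Iic (0:ℝ), Real.exp y ∂μ
      = (gaussianReal (σ ^ 2 / 2) v (Set.Iic 0)).toReal := by
    rw [hμ, setIntegral_gaussianReal_pdf _ v hv measurableSet_Iic]
    have : ∀ y ∈ Set.Iic (0:ℝ), gaussianPDFReal (-σ ^ 2 / 2) v y * Real.exp y
        = gaussianPDFReal (σ ^ 2 / 2) v y := fun y _ => tilt σ hσ y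
    rw [setIntegral_congr_fun measurableSet_Iic this,
      gaussianReal_apply_eq_integral _ hv,
      ENNReal.toReal_ofReal (integral_nonneg fun y => gaussianPDFReal_nonneg _ _ _)]
  have hB : ∫ y in Set.Ioi (0:ℝ), (1:ℝ) ∂μ = (μ (Set.Ioi 0)).toReal := by
    rw [setIntegral_const, smul_eq_mul, mul_one, Measure.real]
  rw [hA, hB]
  -- measure identities
  have key1 : gaussianReal (σ ^ 2 / 2) v (Set.Iic 0)
      = gaussianReal 0 1 (Set.Iic (-σ / 2)) := by
    have hmap : (gaussianReal 0 1).map (fun x => σ * x + σ ^ 2 / 2)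
        = gaussianReal (σ ^ 2 / 2) v := by
      have h1 : ((gaussianReal 0 1).map (σ * ·)) = gaussianReal 0 v := by
        rw [gaussianReal_map_const_mul σ]
        congr 1 <;> simp [hvdef]; rfl
      calc (gaussianReal 0 1).map (fun x => σ * x + σ ^ 2 / 2)
          = (((gaussianReal 0 1).map (σ * ·)).map (· + σ ^ 2 / 2)) :=
            (Measure.map_map (measurable_id'.add_const _) (measurable_const_mul σ)).symm
        _ = gaussianReal (σ ^ 2 / 2) v := by rw [h1, gaussianReal_map_add_const]; ring_nf
    rw [← hmap, Measure.map_apply (by fun_prop) measurableSet_Iic]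
    congr 1
    ext x
    simp only [Set.mem_preimage, Set.mem_Iic]
    constructor <;> intro h <;> nlinarith
  have key2 : μ (Set.Ioi 0) = gaussianReal 0 1 (Set.Iic (-σ / 2)) := by
    have hmap : (gaussianReal 0 1).map (fun x => σ * x + -σ ^ 2 / 2)
        = gaussianReal (-σ ^ 2 / 2) v := by
      have h1 : ((gaussianReal 0 1).map (σ * ·)) = gaussianReal 0 v := by
        rw [gaussianReal_map_const_mul σ]
        congr 1 <;> simp [hvdef]; rfl
      calc (gaussianReal 0 1).map (fun x => σ * x + -σ ^ 2 / 2)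
          = (((gaussianReal 0 1).map (σ * ·)).map (· + -σ ^ 2 / 2)) :=
            (Measure.map_map (measurable_id'.add_const _) (measurable_const_mul σ)).symm
        _ = gaussianReal (-σ ^ 2 / 2) v := by rw [h1, gaussianReal_map_add_const]; ring_nf
    have hIoi : μ (Set.Ioi 0) = gaussianReal 0 1 (Set.Ioi (σ / 2)) := by
      rw [hμ, ← hmap, Measure.map_apply (by fun_prop) measurableSet_Ioi]
      congr 1
      ext x
      simp only [Set.mem_preimage, Set.mem_Ioi]
      constructor <;> intro h <;> nlinarith
    -- symmetry
    have hneg : (gaussianReal 0 1 : Measure ℝ).map (fun x => (-1:ℝ) * x) = gaussianReal 0 1 := by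
      rw [gaussianReal_map_const_mul (-1 : ℝ)]
      norm_num
    have hsym : gaussianReal 0 1 (Set.Ioi (σ / 2)) = gaussianReal 0 1 (Set.Iio (-σ / 2)) := by
      conv_lhs => rw [← hneg]
      rw [Measure.map_apply (by fun_prop) measurableSet_Ioi]
      congr 1
      ext x
      simp only [Set.mem_preimage, Set.mem_Ioi, Set.mem_Iio]
      constructor <;> intro h <;> linarith
    have hsing : (gaussianReal 0 1 : Measure ℝ) {(-σ/2 : ℝ)} = 0 :=
      gaussianReal_absolutelyContinuous 0 one_ne_zero (measure_singleton _)
    rw [hIoi, hsym, ← Set.Iio_union_right,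
      measure_union (by simp) (measurableSet_singleton _), hsing, add_zero]
  rw [key1, key2, two_mul]
end
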